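/- Let A ∈ ℝ^{n×n}, B ∈ ℝ^{n×m}, and let R₁, R₂ ∈ ℝ^{m×m} be symmetric. Let v ∈ ℝⁿ be nonzero with Aᵀv = λv for some λ ∈ ℝ, let q₁ ≥ 0, suppose r₁ := vᵀBR₁Bᵀv > 0, and set r₂ = vᵀBR₂Bᵀv, s = √(λ² + q₁r₁), p₁ = (λ + s)/r₁, and P₁ = p₁·vvᵀ. Let K ∈ ℝ^{N×N} be symmetric and let γ be an eigenvalue of K. Then −s − γ(r₂/r₁)(λ + s) is an eigenvalue of the closed-loop matrix 𝔸 = I_N⊗(A − BR₁BᵀP₁) − K⊗(BR₂BᵀP₁). -/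

import Mathlib

open Matrix
open scoped Kronecker

private lemma aux_mem_spectrum {ι : Type*} [Fintype ι] [DecidableEq ι]
    (M : Matrix ι ι ℂ) (μ : ℂ) (u : ι → ℂ) (hu : u ≠ 0)
    (h : Mᵀ.mulVec u = μ • u) : μ ∈ spectrum ℂ M := by
  rw [spectrum.mem_iff]
  intro hUnit
  rw [Matrix.isUnit_iff_isUnit_det, isUnit_iff_ne_zero] at hUnit
  apply hUnit
  rw [← Matrix.det_transpose, ← Matrix.exists_mulVec_eq_zero_iff]
  refine ⟨u, hu, ?_⟩
  have ht : (algebraMap ℂ (Matrix ι ι ℂ) μ - M)ᵀ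
      = algebraMap ℂ (Matrix ι ι ℂ) μ - Mᵀ := by
    simp [Matrix.algebraMap_eq_diagonal, Matrix.transpose_sub]
  rw [ht, Matrix.sub_mulVec, h]
  funext i
  simp [Matrix.algebraMap_eq_diagonal, Matrix.mulVec_diagonal]

private lemma aux_kron_mulVec {N n : ℕ}
    (P : Matrix (Fin N) (Fin N) ℝ) (Q : Matrix (Fin n) (Fin n) ℝ)
    (a : Fin N → ℝ) (b : Fin n → ℝ) :
    (P ⊗ₖ Q)ᵀ.mulVec (fun p => a p.1 * b p.2)
      = fun p => Pᵀ.mulVec a p.1 * Qᵀ.mulVec b p.2 := by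
  funext ⟨i, j⟩
  simp only [Matrix.mulVec, dotProduct, Matrix.transpose_apply,
    Matrix.kroneckerMap_apply, Fintype.sum_prod_type]
  rw [Finset.sum_mul_sum]
  exact Finset.sum_congr rfl fun k _ => Finset.sum_congr rfl fun l _ => by ring

/-- Eigenvalues of the closed-loop matrix with the rank-one Riccati solution: with
`Aᵀv = λv`, `r₁ = vᵀBR₁Bᵀv > 0`, `r₂ = vᵀBR₂Bᵀv`, `s = √(λ² + q₁r₁)`, `p₁ = (λ+s)/r₁`,
`P₁ = p₁ vvᵀ`, and `γ` an eigenvalue of the symmetric matrix `K`, the number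
`−s − γ(r₂/r₁)(λ+s)` is an eigenvalue of `𝔸 = I_N ⊗ (A − BR₁BᵀP₁) − K ⊗ (BR₂BᵀP₁)`. -/
theorem stmt_7 {n m N : ℕ}
    (A : Matrix (Fin n) (Fin n) ℝ) (B : Matrix (Fin n) (Fin m) ℝ)
    (R₁ R₂ : Matrix (Fin m) (Fin m) ℝ) (hR₁ : R₁.IsSymm) (hR₂ : R₂.IsSymm)
    (v : Fin n → ℝ) (hv : v ≠ 0) (lam : ℝ) (hAv : Aᵀ.mulVec v = lam • v)
    (q₁ : ℝ) (hq₁ : 0 ≤ q₁)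
    (r₁ : ℝ) (hr₁ : r₁ = v ⬝ᵥ (B * R₁ * Bᵀ).mulVec v) (hr₁pos : 0 < r₁)
    (r₂ : ℝ) (hr₂ : r₂ = v ⬝ᵥ (B * R₂ * Bᵀ).mulVec v)
    (s : ℝ) (hs : s = Real.sqrt (lam ^ 2 + q₁ * r₁))
    (p₁ : ℝ) (hp₁ : p₁ = (lam + s) / r₁)
    (P₁ : Matrix (Fin n) (Fin n) ℝ) (hP₁ : P₁ = p₁ • Matrix.vecMulVec v v)
    (K : Matrix (Fin N) (Fin N) ℝ) (hK : K.IsSymm)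
    (γ : ℝ) (hγ : γ ∈ spectrum ℝ K)
    (𝔸 : Matrix (Fin N × Fin n) (Fin N × Fin n) ℝ)
    (h𝔸 : 𝔸 = (1 : Matrix (Fin N) (Fin N) ℝ) ⊗ₖ (A - B * R₁ * Bᵀ * P₁)
              - K ⊗ₖ (B * R₂ * Bᵀ * P₁)) :
    ((-s - γ * (r₂ / r₁) * (lam + s) : ℝ) : ℂ) ∈ spectrum ℂ (𝔸.map Complex.ofReal) := by
  -- extract a real eigenvector of K
  obtain ⟨w, hw0, hKw⟩ : ∃ w : Fin N → ℝ, w ≠ 0 ∧ K.mulVec w = γ • w := by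
    rw [spectrum.mem_iff] at hγ
    rw [Matrix.isUnit_iff_isUnit_det, isUnit_iff_ne_zero, not_ne_iff,
      ← Matrix.exists_mulVec_eq_zero_iff] at hγ
    obtain ⟨w, hw0, hw⟩ := hγ
    refine ⟨w, hw0, ?_⟩
    rw [Matrix.sub_mulVec] at hw
    have h2 : (algebraMap ℝ (Matrix (Fin N) (Fin N) ℝ) γ).mulVec w = γ • w := by
      funext i; simp [Matrix.algebraMap_eq_diagonal, Matrix.mulVec_diagonal]
    rw [h2] at hw
    exact (sub_eq_zero.mp hw).symm
  -- rank-one action of P₁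
  have hP₁mul : ∀ x : Fin n → ℝ, P₁.mulVec x = (p₁ * (v ⬝ᵥ x)) • v := by
    intro x
    subst hP₁
    funext i
    simp only [Matrix.mulVec, dotProduct, Matrix.smul_apply,
      Matrix.vecMulVec_apply, Pi.smul_apply, smul_eq_mul, Finset.mul_sum,
      Finset.sum_mul]
    exact Finset.sum_congr rfl fun j _ => by ring
  have hP₁t : P₁ᵀ = P₁ := by
    subst hP₁
    funext i j
    simp [Matrix.vecMulVec_apply, mul_comm]
  have hsym : ∀ (R : Matrix (Fin m) (Fin m) ℝ), R.IsSymm → (B * R * Bᵀ)ᵀ = B * R * Bᵀ := by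
    intro R hR
    rw [Matrix.transpose_mul, Matrix.transpose_mul, Matrix.transpose_transpose,
      hR.eq, Matrix.mul_assoc]
  have hr₁ne : r₁ ≠ 0 := ne_of_gt hr₁pos
  -- eigen-equations for the blocks
  have hCv : (A - B * R₁ * Bᵀ * P₁)ᵀ.mulVec v = (-s) • v := by
    rw [Matrix.transpose_sub, Matrix.sub_mulVec, hAv, Matrix.transpose_mul, hP₁t,
      hsym R₁ hR₁, ← Matrix.mulVec_mulVec, hP₁mul, ← hr₁]
    have : p₁ * r₁ = lam + s := by rw [hp₁]; field_simp
    rw [this]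
    funext i
    simp [Pi.smul_apply, smul_eq_mul]
    ring
  have hDv : (B * R₂ * Bᵀ * P₁)ᵀ.mulVec v = (p₁ * r₂) • v := by
    rw [Matrix.transpose_mul, hP₁t, hsym R₂ hR₂, ← Matrix.mulVec_mulVec, hP₁mul, ← hr₂]
  -- the eigenvector of 𝔸ᵀ
  set μ : ℝ := -s - γ * (r₂ / r₁) * (lam + s) with hμ
  set u : Fin N × Fin n → ℝ := fun p => w p.1 * v p.2 with hu
  have hmain : 𝔸ᵀ.mulVec u = μ • u := by
    subst h𝔸
    rw [Matrix.transpose_sub, Matrix.sub_mulVec, hu, aux_kron_mulVec, aux_kron_mulVec]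
    funext p
    have h1 : (1 : Matrix (Fin N) (Fin N) ℝ)ᵀ.mulVec w = w := by
      rw [Matrix.transpose_one, Matrix.one_mulVec]
    have h2 : Kᵀ.mulVec w = γ • w := by rw [hK.eq, hKw]
    have hμ' : μ = -s - γ * (p₁ * r₂) := by
      rw [hμ, hp₁]; field_simp
    simp only [Pi.sub_apply, h1, h2, hCv, hDv, Pi.smul_apply, smul_eq_mul, hμ']
    ring
  -- complexify
  refine aux_mem_spectrum _ _ (fun p => (u p : ℂ)) ?_ ?_
  · obtain ⟨i, hi⟩ := Function.ne_iff.mp hw0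
    obtain ⟨j, hj⟩ := Function.ne_iff.mp hv
    intro h0
    have := congrFun h0 (i, j)
    simp only [hu, Pi.zero_apply, Complex.ofReal_eq_zero] at this
    exact (mul_ne_zero hi hj) this
  · rw [← Matrix.transpose_map]
    funext p
    have heq : (𝔸ᵀ.map Complex.ofReal).mulVec (fun q => ((u q : ℂ))) p
        = (((𝔸ᵀ.mulVec u) p : ℝ) : ℂ) := by
      simp only [Matrix.mulVec, dotProduct, Matrix.map_apply]
      push_cast
      rfl
    rw [heq, hmain]
    simp [Pi.smul_apply, smul_eq_mul]
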